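/- Let R ⊆ S be an extension of integral domains with S module-finite over R, and let c be a nonzero element of S. Then there exists an R-linear map φ : S → R such that φ(c) is a nonzero element of R. -/

import Mathlib

/-- For a module-finite extension of domains `R ⊆ S` and a nonzero `c ∈ S`, there is
an `R`-linear map `φ : S → R` with `φ(c) ≠ 0`. -/
theorem exists_linearMap_ne_zero_of_module_finite
    (R : Type) [CommRing R] [IsDomain R] (S : Type) [CommRing S] [IsDomain S]
    [Algebra R S] (hinj : Function.Injective (algebraMap R S)) [Module.Finite R S]
    (c : S) (hc : c ≠ 0) :
    ∃ φ : S →ₗ[R] R, φ c ≠ 0 := by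
  classical
  have hsmul : NoZeroSMulDivisors R S := ⟨fun {r x} h => by
    rw [Algebra.smul_def] at h
    rcases mul_eq_zero.mp h with h | h
    · exact Or.inl (hinj (h.trans (map_zero _).symm))
    · exact Or.inr h⟩
  let K := FractionRing R
  let M := LocalizedModule (nonZeroDivisors R) S
  let f : S →ₗ[R] M := LocalizedModule.mkLinearMap (nonZeroDivisors R) S
  have hfM : Module.Finite K M :=
    Module.Finite.of_isLocalizedModule (nonZeroDivisors R) f
  have hfc : f c ≠ 0 := by
    intro h
    obtain ⟨s, hs⟩ := (IsLocalizedModule.eq_zero_iff (nonZeroDivisors R) f).mp h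
    have h2 : algebraMap R S (s : R) * c = 0 := by
      rw [← Algebra.smul_def]; exact hs
    rcases mul_eq_zero.mp h2 with h3 | h3
    · exact nonZeroDivisors.ne_zero s.2 (hinj (by simpa using h3))
    · exact hc h3
  obtain ⟨g, hg⟩ : ∃ g : Module.Dual K M, g (f c) ≠ 0 := by
    by_contra h
    push_neg at h
    exact hfc ((Module.forall_dual_apply_eq_zero_iff K (f c)).mp h)
  let ψ : S →ₗ[R] K := (g.restrictScalars R).comp f
  have hψc : ψ c ≠ 0 := hg
  obtain ⟨T, hT⟩ := Module.Finite.fg_top (R := R) (M := S)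
  obtain ⟨b, hb⟩ := IsLocalization.exist_integer_multiples (nonZeroDivisors R) T
    (fun s : S => ψ s)
  have hint : ∀ x : S, IsLocalization.IsInteger R (((b : R) • ψ) x) := by
    intro x
    have hx : x ∈ Submodule.span R (T : Set S) := hT ▸ Submodule.mem_top
    induction hx using Submodule.span_induction with
    | mem y hy => exact hb y hy
    | zero => simpa using IsLocalization.isInteger_zero (R := R) (S := K)
    | add y z _ _ hy hz => simpa using IsLocalization.isInteger_add hy hz
    | smul r y _ hy => simpa using IsLocalization.isInteger_smul hy
  choose φ' hφ' using hint
  have hinjK : Function.Injective (algebraMap R K) := IsFractionRing.injective R K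
  let φ : S →ₗ[R] R :=
    { toFun := φ'
      map_add' := fun x y => hinjK (by rw [hφ', map_add, map_add, hφ', hφ'])
      map_smul' := fun r x => hinjK (by
        rw [hφ', map_smul, RingHom.id_apply, Algebra.smul_def, ← hφ' x,
          ← map_mul, Algebra.smul_def]
        simp) }
  refine ⟨φ, fun h => ?_⟩
  have h0 : algebraMap R K (φ c) = (b : R) • ψ c := hφ' c
  rw [h, map_zero] at h0
  have hb0 : algebraMap R K (b : R) ≠ 0 := fun hb0 =>
    nonZeroDivisors.ne_zero b.2 (hinjK (by simpa using hb0))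
  rw [Algebra.smul_def] at h0
  exact (mul_ne_zero hb0 hψc) h0.symm
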